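/- arXiv:2001.01288 — 2 statements merged into one kernel-verified Lean document; each statement's English description precedes it below -/
import Mathlib

section
/- Let γ : [0,∞) → ℝ be C² with γ > 0, γ' ≤ 0, lim_{s→∞} γ(s) = 0, and 2(γ'(s))² ≤ γ(s)·γ''(s) for all s > 0. Then for every k > 1, lim_{s→∞} s^k·γ(s) = +∞. -/
open Filter Set

theorem stmt_7 (γ : ℝ → ℝ) (hC2 : ContDiff ℝ 2 γ)
    (hpos : ∀ s, 0 ≤ s → 0 < γ s) (hder : ∀ s, 0 ≤ s → deriv γ s ≤ 0)
    (hlim : Tendsto γ atTop (nhds 0))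
    (hA3 : ∀ s, 0 < s → 2 * (deriv γ s) ^ 2 ≤ γ s * deriv (deriv γ) s) :
    ∀ k : ℝ, 1 < k → Tendsto (fun s : ℝ => s ^ k * γ s) atTop atTop := by
  intro k hk
  have hdiff : Differentiable ℝ γ := hC2.differentiable (by norm_num)
  have hdiff' : Differentiable ℝ (deriv γ) := by
    have h2 : ContDiff ℝ ((1:ℕ) + 1) γ := by exact_mod_cast hC2
    exact (contDiff_succ_iff_deriv.mp h2).2.2.differentiable (by norm_num)
  set f : ℝ → ℝ := fun t => (γ t)⁻¹ with hfdef
  -- first derivative of f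
  have hf1 : ∀ s, 0 < s → HasDerivAt f (-(deriv γ s) / γ s ^ 2) s := by
    intro s hs
    exact ((hdiff s).hasDerivAt).inv (ne_of_gt (hpos s hs.le))
  have hdf : ∀ s, 0 < s → deriv f s = -(deriv γ s) / γ s ^ 2 := fun s hs =>
    (hf1 s hs).deriv
  -- second derivative of f
  have hf2 : ∀ s, 0 < s → HasDerivAt (deriv f)
      (((-(deriv (deriv γ) s)) * γ s ^ 2 - (-(deriv γ s)) * (2 * γ s ^ 1 * deriv γ s))
        / (γ s ^ 2) ^ 2) s := by
    intro s hs
    have hu : HasDerivAt (fun t => -(deriv γ t)) (-(deriv (deriv γ) s)) s :=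
      ((hdiff' s).hasDerivAt).neg
    have hv : HasDerivAt (fun t => γ t ^ 2) (2 * γ s ^ 1 * deriv γ s) s := by
      simpa [Pi.pow_def] using ((hdiff s).hasDerivAt).pow 2
    have hvne : γ s ^ 2 ≠ 0 := pow_ne_zero _ (ne_of_gt (hpos s hs.le))
    have hform : HasDerivAt (fun t => -(deriv γ t) / γ t ^ 2)
        (((-(deriv (deriv γ) s)) * γ s ^ 2 - (-(deriv γ s)) * (2 * γ s ^ 1 * deriv γ s))
          / (γ s ^ 2) ^ 2) s := hu.div hv hvne
    have heq : deriv f =ᶠ[nhds s] (fun t => -(deriv γ t) / γ t ^ 2) := by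
      filter_upwards [isOpen_Ioi.mem_nhds (show s ∈ Ioi 0 from hs)] with t ht
      exact hdf t ht
    exact hform.congr_of_eventuallyEq heq
  have hsnd_nonpos : ∀ s, 0 < s → deriv (deriv f) s ≤ 0 := by
    intro s hs
    rw [(hf2 s hs).deriv]
    have hγ := hpos s hs.le
    have hA := hA3 s hs
    apply div_nonpos_of_nonpos_of_nonneg
    · nlinarith
    · positivity
  -- deriv f is antitone on [1, ∞)
  have hcontf' : ContinuousOn (deriv f) (Ici 1) := by
    have : ContinuousOn (fun t => -(deriv γ t) / γ t ^ 2) (Ici 1) := by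
      apply ContinuousOn.div (hdiff'.continuous.neg.continuousOn)
        ((hdiff.continuous.pow 2).continuousOn)
      intro x hx
      exact pow_ne_zero _ (ne_of_gt (hpos x (by linarith [mem_Ici.mp hx])))
    exact this.congr fun x hx => hdf x (by linarith [mem_Ici.mp hx])
  have hanti : AntitoneOn (deriv f) (Ici 1) := by
    apply antitoneOn_of_deriv_nonpos (convex_Ici 1) hcontf'
    · intro x hx
      rw [interior_Ici] at hx
      exact (hf2 x (by linarith [mem_Ioi.mp hx])).differentiableAt.differentiableWithinAt
    · intro x hx
      rw [interior_Ici] at hx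
      exact hsnd_nonpos x (by linarith [mem_Ioi.mp hx])
  set D : ℝ := deriv f 1 with hDdef
  have hD0 : 0 ≤ D := by
    rw [hDdef, hdf 1 one_pos]
    have h1 := hder 1 zero_le_one
    have h2 := hpos 1 zero_le_one
    apply div_nonneg (by linarith) (by positivity)
  -- g = f - D * id is antitone on [1, ∞)
  have hcontf : ContinuousOn f (Ici 1) := by
    apply ContinuousOn.inv₀ hdiff.continuous.continuousOn
    intro x hx
    exact ne_of_gt (hpos x (by linarith [mem_Ici.mp hx]))
  have hcontg : ContinuousOn (fun t => f t - D * t) (Ici 1) :=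
    hcontf.sub ((continuous_const.mul continuous_id').continuousOn)
  have hganti : AntitoneOn (fun t => f t - D * t) (Ici 1) := by
    apply antitoneOn_of_deriv_nonpos (convex_Ici 1) hcontg
    · intro x hx
      rw [interior_Ici] at hx
      have hx1 : (1:ℝ) < x := mem_Ioi.mp hx
      have hd2 : HasDerivAt (fun t : ℝ => D * t) D x := by
        simpa using (hasDerivAt_id x).const_mul D
      exact ((hf1 x (by linarith)).sub hd2).differentiableAt.differentiableWithinAt
    · intro x hx
      rw [interior_Ici] at hx
      have hx1 : (1:ℝ) < x := mem_Ioi.mp hx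
      have hd : HasDerivAt (fun t => f t - D * t) (deriv f x - D) x := by
        have h1 : HasDerivAt f (deriv f x) x := by
          rw [hdf x (by linarith)]; exact hf1 x (by linarith)
        have h2 : HasDerivAt (fun t : ℝ => D * t) D x := by
          simpa using (hasDerivAt_id x).const_mul D
        exact h1.sub h2
      rw [hd.deriv]
      have := hanti (mem_Ici.mpr le_rfl) (mem_Ici.mpr hx1.le) hx1.le
      linarith [hDdef ▸ this]
  set C : ℝ := f 1 + D with hCdef
  have hf1pos : 0 < f 1 := by
    have := hpos 1 zero_le_one
    positivity
  have hCpos : 0 < C := by positivity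
  -- linear bound : f s ≤ C * s for s ≥ 1
  have hbound : ∀ s, 1 ≤ s → f s ≤ C * s := by
    intro s hs
    have := hganti (mem_Ici.mpr le_rfl) (mem_Ici.mpr hs) hs
    simp only at this
    nlinarith
  -- conclude
  have hmain : ∀ᶠ s in atTop, s ^ (k - 1) / C ≤ s ^ k * γ s := by
    filter_upwards [eventually_ge_atTop (1:ℝ)] with s hs
    have hs0 : (0:ℝ) < s := by linarith
    have hγs : 0 < γ s := hpos s hs0.le
    have hfs : 0 < f s := by positivity
    have hinv : (C * s)⁻¹ ≤ γ s := by
      have h1 : (f s)⁻¹ = γ s := by simp [hfdef]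
      calc (C * s)⁻¹ ≤ (f s)⁻¹ := inv_anti₀ hfs (hbound s hs)
        _ = γ s := h1
    have hkpos : (0:ℝ) ≤ s ^ k := (Real.rpow_pos_of_pos hs0 k).le
    have hxk : s ^ k = s ^ (k - 1) * s := by
      rw [← Real.rpow_add_one (ne_of_gt hs0)]
      norm_num
    calc s ^ (k - 1) / C = s ^ k * (C * s)⁻¹ := by
          rw [hxk, mul_inv]
          field_simp
      _ ≤ s ^ k * γ s := by
          exact mul_le_mul_of_nonneg_left hinv hkpos
  refine tendsto_atTop_mono' atTop hmain ?_
  exact (tendsto_rpow_atTop (by linarith : (0:ℝ) < k - 1)).atTop_div_const hCpos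
end

section
/- Let y, g, h be positive locally integrable functions on (t₀,∞) with y absolutely continuous, satisfying y'(t) ≤ g(t)·y(t) + h(t) for all t ≥ t₀. Suppose there are positive constants r, a₁, a₂, a₃ such that for all t ≥ t₀, ∫_t^{t+r} g ≤ a₁, ∫_t^{t+r} h ≤ a₂, and ∫_t^{t+r} y ≤ a₃. Then for all t ≥ t₀, y(t + r) ≤ (a₃/r + a₂)·e^{a₁}. -/
open MeasureTheory Set Filter Topology

lemma lemA (g : ℝ → ℝ) (s d : ℝ) (hsd : s ≤ d)
    (hint : IntervalIntegrable g volume s d)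
    (hpos : ∀ x ∈ Icc s d, 0 ≤ g x) :
    (∫ τ in s..d, g τ * Real.exp (∫ σ in s..τ, g σ)) ≤
      Real.exp (∫ σ in s..d, g σ) - 1 := by
  set G : ℝ → ℝ := fun τ => ∫ σ in s..τ, g σ with hGdef
  have hsub : ∀ c e : ℝ, c ∈ Icc s d → e ∈ Icc s d → IntervalIntegrable g volume c e := by
    intro c e hc he
    refine hint.mono_set ?_
    rw [uIcc_of_le hsd]
    exact uIcc_subset_Icc hc he
  have hGadd : ∀ c e : ℝ, c ∈ Icc s d → e ∈ Icc s d → G e - G c = ∫ σ in c..e, g σ := by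
    intro c e hc he
    exact intervalIntegral.integral_interval_sub_left
      (hsub s e (left_mem_Icc.2 hsd) he) (hsub s c (left_mem_Icc.2 hsd) hc)
  have hGmono : ∀ c e : ℝ, c ∈ Icc s d → e ∈ Icc s d → c ≤ e → G c ≤ G e := by
    intro c e hc he hce
    have h0 : (0:ℝ) ≤ ∫ σ in c..e, g σ := by
      refine intervalIntegral.integral_nonneg hce fun u hu => hpos u ?_
      exact ⟨hc.1.trans hu.1, hu.2.trans he.2⟩
    have := hGadd c e hc he
    linarith
  have hGcont : ContinuousOn G (Icc s d) := by
    have : IntegrableOn g (uIcc s d) volume := by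
      rw [uIcc_of_le hsd]
      exact (intervalIntegrable_iff_integrableOn_Icc_of_le hsd).1 hint
    have h := intervalIntegral.continuousOn_primitive_interval (a := s) (b := d) (μ := volume) this
    rwa [uIcc_of_le hsd] at h
  have hGs : G s = 0 := intervalIntegral.integral_same
  have hΔ0 : 0 ≤ G d := by
    have := hGmono s d (left_mem_Icc.2 hsd) (right_mem_Icc.2 hsd) hsd
    linarith [hGs]
  show (∫ τ in s..d, g τ * Real.exp (G τ)) ≤ Real.exp (G d) - 1
  rcases eq_or_lt_of_le hΔ0 with hΔz | hΔpos
  · -- degenerate case: total integral zero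
    have hGz : ∀ τ ∈ Icc s d, G τ = 0 := fun τ hτ =>
      le_antisymm (by have := hGmono τ d hτ (right_mem_Icc.2 hsd) hτ.2; linarith)
        (by have := hGmono s τ (left_mem_Icc.2 hsd) hτ hτ.1; linarith [hGs])
    have hcongr : (∫ τ in s..d, g τ * Real.exp (G τ)) = ∫ τ in s..d, g τ := by
      refine intervalIntegral.integral_congr fun τ hτ => ?_
      rw [uIcc_of_le hsd] at hτ
      rw [hGz τ hτ, Real.exp_zero, mul_one]
    rw [hcongr, ← hΔz, Real.exp_zero]
    have : (∫ τ in s..d, g τ) = G d := rfl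
    rw [this, ← hΔz]
    norm_num
  · -- main case
    have claim : ∀ n : ℕ, 0 < n →
        (∫ τ in s..d, g τ * Real.exp (G τ)) ≤
          Real.exp (G d / n) * (Real.exp (G d) - 1) := by
      intro n hn
      set Δ := G d / n with hΔdef
      have hnR : (0:ℝ) < n := Nat.cast_pos.2 hn
      have hΔpos' : 0 < Δ := div_pos hΔpos hnR
      have hnΔ : (n : ℝ) * Δ = G d := by
        rw [hΔdef]; field_simp
      have hex : ∀ i : ℕ, ∃ xi, xi ∈ Icc s d ∧ G xi = (min i n : ℕ) * Δ := by
        intro i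
        have hmem : ((min i n : ℕ) : ℝ) * Δ ∈ Icc (G s) (G d) := by
          rw [hGs]
          constructor
          · positivity
          · have h1 : ((min i n : ℕ):ℝ) ≤ (n:ℝ) := Nat.cast_le.2 (min_le_right _ _)
            nlinarith
        obtain ⟨xi, hxi, hGxi⟩ := intermediate_value_Icc hsd hGcont hmem
        exact ⟨xi, hxi, hGxi⟩
      choose xc hxc hGxc using hex
      set p : ℕ → ℝ := fun i => if i = 0 then s else if n ≤ i then d else xc i with hpdef
      have hpmem : ∀ i, p i ∈ Icc s d := by
        intro i; simp only [hpdef]; split_ifs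
        exacts [left_mem_Icc.2 hsd, right_mem_Icc.2 hsd, hxc i]
      have hGp : ∀ i, i ≤ n → G (p i) = i * Δ := by
        intro i hi
        simp only [hpdef]
        split_ifs with h0 h1
        · subst h0; rw [hGs]; simp
        · have hin : i = n := le_antisymm hi h1
          subst hin; exact hnΔ.symm
        · rw [hGxc i, min_eq_left hi]
      have hpadj : ∀ i, i < n → p i ≤ p (i+1) := by
        intro i hi
        by_contra hcon
        push_neg at hcon
        have h1 := hGmono (p (i+1)) (p i) (hpmem _) (hpmem _) hcon.le
        rw [hGp i hi.le, hGp (i+1) hi] at h1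
        push_cast at h1
        nlinarith
      have hp0 : p 0 = s := by simp [hpdef]
      have hpn : p n = d := by simp [hpdef, hn.ne']
      have hΦcont : ContinuousOn (fun τ => Real.exp (G τ)) (Icc s d) :=
        Real.continuous_exp.comp_continuousOn hGcont
      have hintΦ : ∀ i, i < n → IntervalIntegrable (fun τ => g τ * Real.exp (G τ))
          volume (p i) (p (i+1)) := by
        intro i hi
        refine (hsub _ _ (hpmem i) (hpmem (i+1))).mul_continuousOn ?_
        exact hΦcont.mono (uIcc_subset_Icc (hpmem i) (hpmem (i+1)))
      have hsum := intervalIntegral.sum_integral_adjacent_intervals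
        (f := fun τ => g τ * Real.exp (G τ)) (a := p) (μ := volume) hintΦ
      rw [hp0, hpn] at hsum
      rw [← hsum]
      have hpiece : ∀ i ∈ Finset.range n,
          (∫ τ in p i..p (i+1), g τ * Real.exp (G τ))
            ≤ Real.exp Δ * (Real.exp (((i:ℝ)+1) * Δ) - Real.exp ((i:ℝ) * Δ)) := by
        intro i hi
        rw [Finset.mem_range] at hi
        have hple := hpadj i hi
        have step1 : (∫ τ in p i..p (i+1), g τ * Real.exp (G τ))
            ≤ ∫ τ in p i..p (i+1), g τ * Real.exp (((i:ℝ)+1) * Δ) := by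
          refine intervalIntegral.integral_mono_on hple (hintΦ i hi)
            ((hsub _ _ (hpmem i) (hpmem (i+1))).mul_const _) ?_
          intro τ hτ
          have hτmem : τ ∈ Icc s d := ⟨(hpmem i).1.trans hτ.1, hτ.2.trans (hpmem (i+1)).2⟩
          have hGle : G τ ≤ G (p (i+1)) := hGmono τ (p (i+1)) hτmem (hpmem (i+1)) hτ.2
          rw [hGp (i+1) hi] at hGle
          push_cast at hGle
          have hexple : Real.exp (G τ) ≤ Real.exp (((i:ℝ)+1) * Δ) :=
            Real.exp_le_exp.2 (by linarith)
          exact mul_le_mul_of_nonneg_left hexple (hpos τ hτmem)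
        have step2 : (∫ τ in p i..p (i+1), g τ * Real.exp (((i:ℝ)+1) * Δ))
            = Δ * Real.exp (((i:ℝ)+1) * Δ) := by
          rw [intervalIntegral.integral_mul_const]
          have hadd := hGadd (p i) (p (i+1)) (hpmem i) (hpmem (i+1))
          rw [hGp i hi.le, hGp (i+1) hi] at hadd
          rw [← hadd]
          push_cast
          ring
        have step3 : Δ * Real.exp (((i:ℝ)+1) * Δ)
            ≤ Real.exp Δ * (Real.exp (((i:ℝ)+1) * Δ) - Real.exp ((i:ℝ) * Δ)) := by
          have he1 : Real.exp (((i:ℝ)+1) * Δ) = Real.exp ((i:ℝ) * Δ) * Real.exp Δ := by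
            rw [← Real.exp_add]; ring_nf
          have he2 : Δ + 1 ≤ Real.exp Δ := Real.add_one_le_exp Δ
          have he3 : (0:ℝ) < Real.exp ((i:ℝ) * Δ) := Real.exp_pos _
          have he4 : (0:ℝ) < Real.exp Δ := Real.exp_pos _
          rw [he1]
          nlinarith [mul_nonneg (mul_nonneg he3.le he4.le)
            (by linarith : (0:ℝ) ≤ Real.exp Δ - 1 - Δ)]
        linarith
      calc (∑ i ∈ Finset.range n, ∫ τ in p i..p (i+1), g τ * Real.exp (G τ))
          ≤ ∑ i ∈ Finset.range n,
            Real.exp Δ * (Real.exp (((i:ℝ)+1) * Δ) - Real.exp ((i:ℝ) * Δ)) :=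
            Finset.sum_le_sum hpiece
        _ = Real.exp Δ * (Real.exp (G d) - 1) := by
            rw [← Finset.mul_sum]
            congr 1
            have htel := Finset.sum_range_sub (fun i : ℕ => Real.exp ((i:ℝ) * Δ)) n
            push_cast at htel
            rw [htel, hnΔ]
            norm_num
    have hlim : Tendsto (fun n : ℕ => Real.exp (G d / n) * (Real.exp (G d) - 1)) atTop
        (𝓝 (Real.exp (G d) - 1)) := by
      have h1 : Tendsto (fun n : ℕ => G d / n) atTop (𝓝 0) :=
        tendsto_const_div_atTop_nhds_zero_nat _
      have h2 := (Real.continuous_exp.tendsto 0).comp h1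
      rw [Real.exp_zero] at h2
      have h3 := h2.mul_const (Real.exp (G d) - 1)
      rwa [one_mul] at h3
    refine ge_of_tendsto hlim ?_
    filter_upwards [eventually_gt_atTop 0] with n hn using claim n hn

lemma gronwall_core (t₀ : ℝ) (y g h : ℝ → ℝ) (s b : ℝ) (hs : t₀ < s) (hsb : s ≤ b)
    (hy_diff : ∀ t, t₀ ≤ t → DifferentiableAt ℝ y t)
    (hineq : ∀ t, t₀ ≤ t → deriv y t ≤ g t * y t + h t)
    (hg_int : IntervalIntegrable g volume s b) (hh_int : IntervalIntegrable h volume s b)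
    (hg0 : ∀ x ∈ Icc s b, 0 ≤ g x) (hh0 : ∀ x ∈ Icc s b, 0 ≤ h x)
    (hys : 0 ≤ y s) :
    y b ≤ (y s + ∫ τ in s..b, h τ) * Real.exp (∫ τ in s..b, g τ) := by
  set A := ∫ τ in s..b, h τ with hAdef
  set G : ℝ → ℝ := fun τ => ∫ σ in s..τ, g σ with hGdef
  have hA0 : 0 ≤ A := intervalIntegral.integral_nonneg hsb hh0
  have hgsub : ∀ c e : ℝ, c ∈ Icc s b → e ∈ Icc s b → IntervalIntegrable g volume c e := by
    intro c e hc he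
    exact hg_int.mono_set (by rw [uIcc_of_le hsb]; exact uIcc_subset_Icc hc he)
  have hhsub : ∀ c e : ℝ, c ∈ Icc s b → e ∈ Icc s b → IntervalIntegrable h volume c e := by
    intro c e hc he
    exact hh_int.mono_set (by rw [uIcc_of_le hsb]; exact uIcc_subset_Icc hc he)
  have hGadd : ∀ c e : ℝ, c ∈ Icc s b → e ∈ Icc s b → G e - G c = ∫ σ in c..e, g σ := by
    intro c e hc he
    exact intervalIntegral.integral_interval_sub_left
      (hgsub s e (left_mem_Icc.2 hsb) he) (hgsub s c (left_mem_Icc.2 hsb) hc)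
  have hGmono : ∀ c e : ℝ, c ∈ Icc s b → e ∈ Icc s b → c ≤ e → G c ≤ G e := by
    intro c e hc he hce
    have h0 : (0:ℝ) ≤ ∫ σ in c..e, g σ := by
      refine intervalIntegral.integral_nonneg hce fun u hu => hg0 u ?_
      exact ⟨hc.1.trans hu.1, hu.2.trans he.2⟩
    have := hGadd c e hc he
    linarith
  have hGcont : ContinuousOn G (Icc s b) := by
    have hio : IntegrableOn g (uIcc s b) volume := by
      rw [uIcc_of_le hsb]
      exact (intervalIntegrable_iff_integrableOn_Icc_of_le hsb).1 hg_int
    have h2 := intervalIntegral.continuousOn_primitive_interval (a := s) (b := b) (μ := volume) hio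
    rwa [uIcc_of_le hsb] at h2
  have hGs : G s = 0 := intervalIntegral.integral_same
  have hycont : ContinuousOn y (Icc s b) := fun τ hτ =>
    ((hy_diff τ (hs.le.trans hτ.1)).continuousAt).continuousWithinAt
  show y b ≤ (y s + A) * Real.exp (G b)
  have key : ∀ ε > (0:ℝ), y b ≤ (y s + A) * Real.exp (G b) + ε * Real.exp (G b) := by
    intro ε εpos
    set C := y s + ε + A with hCdef
    have hC0 : 0 < C := by positivity
    set w : ℝ → ℝ := fun τ => C * Real.exp (G τ) with hwdef
    have hwcont : ContinuousOn w (Icc s b) :=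
      (continuousOn_const.mul (Real.continuous_exp.comp_continuousOn hGcont))
    have claim : ∀ τ ∈ Icc s b, y τ < w τ := by
      by_contra hcon
      push_neg at hcon
      obtain ⟨τ₁, hτ₁, hwτ₁⟩ := hcon
      set S := Icc s b ∩ {τ | 0 ≤ y τ - w τ} with hSdef
      have hSne : S.Nonempty := ⟨τ₁, hτ₁, by simpa using sub_nonneg.2 hwτ₁⟩
      have hSclosed : IsClosed S := by
        refine ContinuousOn.preimage_isClosed_of_isClosed
          (hycont.sub hwcont) isClosed_Icc (isClosed_Ici (a := (0:ℝ)))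
      have hSbdd : BddBelow S := ⟨s, fun τ hτ => hτ.1.1⟩
      set b₀ := sInf S with hb₀def
      have hb₀S : b₀ ∈ S := hSclosed.csInf_mem hSne hSbdd
      obtain ⟨hb₀mem, hb₀le⟩ := hb₀S
      have hwyb₀ : w b₀ ≤ y b₀ := by simpa [sub_nonneg] using hb₀le
      have hws : y s < w s := by
        have : w s = C := by rw [hwdef]; simp [hGs]
        rw [this, hCdef]; linarith
      have hsb₀ : s < b₀ := by
        rcases eq_or_lt_of_le hb₀mem.1 with heq | hlt
        · exfalso; rw [← heq] at hwyb₀; linarith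
        · exact hlt
      have hlt : ∀ τ ∈ Ico s b₀, y τ < w τ := by
        intro τ hτ
        by_contra hc
        push_neg at hc
        have : τ ∈ S := ⟨⟨hτ.1, hτ.2.le.trans hb₀mem.2⟩, by simpa using sub_nonneg.2 hc⟩
        have := csInf_le hSbdd this
        exact absurd this (not_le.2 hτ.2)
      have hyb₀w : y b₀ ≤ w b₀ := by
        have hne : (𝓝[Ico s b₀] b₀).NeBot := by
          rw [← mem_closure_iff_nhdsWithin_neBot, closure_Ico hsb₀.ne]
          exact right_mem_Icc.2 hsb₀.le
        have htd : Tendsto (fun τ => w τ - y τ) (𝓝[Ico s b₀] b₀) (𝓝 (w b₀ - y b₀)) := by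
          refine (((hwcont.sub hycont) b₀ hb₀mem).mono ?_).tendsto
          exact fun τ hτ => ⟨hτ.1, hτ.2.le.trans hb₀mem.2⟩
        have hev : ∀ᶠ τ in 𝓝[Ico s b₀] b₀, 0 ≤ w τ - y τ :=
          eventually_nhdsWithin_of_forall fun τ hτ => sub_nonneg.2 (hlt τ hτ).le
        have := ge_of_tendsto htd hev
        linarith
      have hyle : ∀ τ ∈ Icc s b₀, y τ ≤ w τ := by
        intro τ hτ
        rcases eq_or_lt_of_le hτ.2 with heq | hl
        · rw [heq]; exact hyb₀w
        · exact (hlt τ ⟨hτ.1, hl⟩).le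
      have hb₀Icc : ∀ τ ∈ Icc s b₀, τ ∈ Icc s b := fun τ hτ => ⟨hτ.1, hτ.2.trans hb₀mem.2⟩
      -- integral inequality for y
      have hyint : IntegrableOn (fun τ => g τ * y τ + h τ) (Icc s b₀) volume := by
        rw [← intervalIntegrable_iff_integrableOn_Icc_of_le hsb₀.le]
        exact ((hgsub s b₀ (left_mem_Icc.2 hsb) hb₀mem).mul_continuousOn
          (hycont.mono (by rw [uIcc_of_le hsb₀.le]; exact hb₀Icc))).add
          (hhsub s b₀ (left_mem_Icc.2 hsb) hb₀mem)
      have E1 : y b₀ - y s ≤ ∫ τ in s..b₀, (g τ * y τ + h τ) := by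
        refine intervalIntegral.sub_le_integral_of_hasDeriv_right_of_le (g' := deriv y) hsb₀.le
          (hycont.mono hb₀Icc) (fun x hx => ?_) hyint (fun x hx => ?_)
        · exact ((hy_diff x (hs.le.trans hx.1.le)).hasDerivAt).hasDerivWithinAt
        · exact hineq x (hs.le.trans hx.1.le)
      have hwint : IntervalIntegrable (fun τ => g τ * w τ + h τ) volume s b₀ :=
        ((hgsub s b₀ (left_mem_Icc.2 hsb) hb₀mem).mul_continuousOn
          (hwcont.mono (by rw [uIcc_of_le hsb₀.le]; exact hb₀Icc))).add
          (hhsub s b₀ (left_mem_Icc.2 hsb) hb₀mem)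
      have E2 : (∫ τ in s..b₀, (g τ * y τ + h τ)) ≤ ∫ τ in s..b₀, (g τ * w τ + h τ) := by
        refine intervalIntegral.integral_mono_on hsb₀.le ?_ hwint ?_
        · rwa [intervalIntegrable_iff_integrableOn_Icc_of_le hsb₀.le]
        · intro τ hτ
          have := mul_le_mul_of_nonneg_left (hyle τ hτ) (hg0 τ (hb₀Icc τ hτ))
          linarith
      have E3 : (∫ τ in s..b₀, (g τ * w τ + h τ))
          ≤ C * (Real.exp (G b₀) - 1) + A := by
        have hsplit : (∫ τ in s..b₀, (g τ * w τ + h τ))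
            = (∫ τ in s..b₀, g τ * w τ) + ∫ τ in s..b₀, h τ := by
          refine intervalIntegral.integral_add ?_ (hhsub s b₀ (left_mem_Icc.2 hsb) hb₀mem)
          exact (hgsub s b₀ (left_mem_Icc.2 hsb) hb₀mem).mul_continuousOn
            (hwcont.mono (by rw [uIcc_of_le hsb₀.le]; exact hb₀Icc))
        have hgw : (∫ τ in s..b₀, g τ * w τ) = C * ∫ τ in s..b₀, g τ * Real.exp (G τ) := by
          rw [← intervalIntegral.integral_const_mul]
          refine intervalIntegral.integral_congr fun τ hτ => ?_
          rw [hwdef]; ring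
        have hlemA := lemA g s b₀ hsb₀.le (hgsub s b₀ (left_mem_Icc.2 hsb) hb₀mem)
          (fun x hx => hg0 x (hb₀Icc x hx))
        have hAb : (∫ τ in s..b₀, h τ) ≤ A := by
          have hd : A - ∫ τ in s..b₀, h τ = ∫ τ in b₀..b, h τ :=
            intervalIntegral.integral_interval_sub_left hh_int
              (hhsub s b₀ (left_mem_Icc.2 hsb) hb₀mem)
          have h0 : (0:ℝ) ≤ ∫ τ in b₀..b, h τ := by
            refine intervalIntegral.integral_nonneg hb₀mem.2 fun u hu => hh0 u ?_
            exact ⟨hb₀mem.1.trans hu.1, hu.2⟩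
          linarith
        rw [hsplit, hgw]
        have : (∫ τ in s..b₀, g τ * Real.exp (G τ)) ≤ Real.exp (G b₀) - 1 := hlemA
        nlinarith
      have hfin : y b₀ ≤ w b₀ - ε := by
        have : w b₀ = C * Real.exp (G b₀) := rfl
        rw [this, hCdef]
        have := E1.trans (E2.trans E3)
        have hexp1 : (1:ℝ) ≤ Real.exp (G b₀) := by
          rw [show (1:ℝ) = Real.exp 0 by simp]
          exact Real.exp_le_exp.2 (by
            have := hGmono s b₀ (left_mem_Icc.2 hsb) hb₀mem hsb₀.le
            linarith [hGs])
        rw [hCdef] at this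
        nlinarith
      linarith
    have := claim b (right_mem_Icc.2 hsb)
    have hwb : w b = C * Real.exp (G b) := rfl
    rw [hwb, hCdef] at this
    nlinarith [Real.exp_pos (G b)]
  refine le_of_forall_pos_le_add fun δ δpos => ?_
  have hd := key (δ / Real.exp (G b)) (div_pos δpos (Real.exp_pos _))
  rwa [div_mul_cancel₀ _ (Real.exp_pos (G b)).ne'] at hd

theorem stmt_8 (t₀ r a₁ a₂ a₃ : ℝ) (hr : 0 < r)
    (y g h : ℝ → ℝ)
    (hy_pos : ∀ t, t₀ < t → 0 < y t) (hg_pos : ∀ t, t₀ < t → 0 < g t)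
    (hh_pos : ∀ t, t₀ < t → 0 < h t)
    (hy_diff : ∀ t, t₀ ≤ t → DifferentiableAt ℝ y t)
    (hineq : ∀ t, t₀ ≤ t → deriv y t ≤ g t * y t + h t)
    (hg_int : ∀ t, t₀ ≤ t → IntervalIntegrable g volume t (t + r))
    (hh_int : ∀ t, t₀ ≤ t → IntervalIntegrable h volume t (t + r))
    (hy_int : ∀ t, t₀ ≤ t → IntervalIntegrable y volume t (t + r))
    (hga : ∀ t, t₀ ≤ t → (∫ s in t..t + r, g s) ≤ a₁)
    (hha : ∀ t, t₀ ≤ t → (∫ s in t..t + r, h s) ≤ a₂)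
    (hya : ∀ t, t₀ ≤ t → (∫ s in t..t + r, y s) ≤ a₃) :
    ∀ t, t₀ ≤ t → y (t + r) ≤ (a₃ / r + a₂) * Real.exp a₁ := by
  have main : ∀ t, t₀ < t → y (t + r) ≤ (a₃ / r + a₂) * Real.exp a₁ := by
    intro t ht
    set b := t + r with hbdef
    have htb : t < b := by rw [hbdef]; linarith
    -- find a point s with y s ≤ a₃ / r
    have hs_ex : ∃ s ∈ Icc t b, y s ≤ a₃ / r := by
      by_contra hcon
      push_neg at hcon
      have hpos' : 0 < ∫ τ in t..b, (y τ - a₃ / r) := by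
        refine intervalIntegral.intervalIntegral_pos_of_pos_on
          ((hy_int t ht.le).sub intervalIntegrable_const) (fun x hx => ?_) htb
        exact sub_pos.2 (hcon x ⟨hx.1.le, hx.2.le⟩)
      rw [intervalIntegral.integral_sub (hy_int t ht.le) intervalIntegrable_const,
        intervalIntegral.integral_const] at hpos'
      have hsm : (b - t) • (a₃ / r) = a₃ := by
        rw [hbdef, smul_eq_mul]
        field_simp
        ring
      rw [hsm] at hpos'
      have := hya t ht.le
      rw [← hbdef] at this
      linarith
    obtain ⟨s, hsmem, hys⟩ := hs_ex
    have hts : t ≤ s := hsmem.1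
    have hsb : s ≤ b := hsmem.2
    have hst₀ : t₀ < s := ht.trans_le hts
    have hbsr : b ≤ s + r := by rw [hbdef]; linarith
    have hssr : s ≤ s + r := by linarith
    have hsubg : IntervalIntegrable g volume s b :=
      (hg_int s hst₀.le).mono_set
        (by rw [uIcc_of_le hsb, uIcc_of_le hssr]; exact Icc_subset_Icc le_rfl hbsr)
    have hsubh : IntervalIntegrable h volume s b :=
      (hh_int s hst₀.le).mono_set
        (by rw [uIcc_of_le hsb, uIcc_of_le hssr]; exact Icc_subset_Icc le_rfl hbsr)
    have hg0 : ∀ x ∈ Icc s b, 0 ≤ g x := fun x hx => (hg_pos x (hst₀.trans_le hx.1)).le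
    have hh0 : ∀ x ∈ Icc s b, 0 ≤ h x := fun x hx => (hh_pos x (hst₀.trans_le hx.1)).le
    have hcore := gronwall_core t₀ y g h s b hst₀ hsb hy_diff hineq hsubg hsubh hg0 hh0
      (hy_pos s hst₀).le
    -- bound the two integrals
    have hsubh2 : IntervalIntegrable h volume b (s + r) :=
      (hh_int s hst₀.le).mono_set
        (by rw [uIcc_of_le hbsr, uIcc_of_le hssr]; exact Icc_subset_Icc hsb le_rfl)
    have hsubg2 : IntervalIntegrable g volume b (s + r) :=
      (hg_int s hst₀.le).mono_set
        (by rw [uIcc_of_le hbsr, uIcc_of_le hssr]; exact Icc_subset_Icc hsb le_rfl)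
    have hH : (∫ τ in s..b, h τ) ≤ a₂ := by
      have hsplit : (∫ τ in s..b, h τ) + (∫ τ in b..s + r, h τ) = ∫ τ in s..s + r, h τ :=
        intervalIntegral.integral_add_adjacent_intervals hsubh hsubh2
      have h0 : (0:ℝ) ≤ ∫ τ in b..s + r, h τ :=
        intervalIntegral.integral_nonneg hbsr fun u hu =>
          (hh_pos u ((hst₀.trans_le hsb).trans_le hu.1)).le
      have := hha s hst₀.le
      linarith
    have hG : (∫ τ in s..b, g τ) ≤ a₁ := by
      have hsplit : (∫ τ in s..b, g τ) + (∫ τ in b..s + r, g τ) = ∫ τ in s..s + r, g τ :=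
        intervalIntegral.integral_add_adjacent_intervals hsubg hsubg2
      have h0 : (0:ℝ) ≤ ∫ τ in b..s + r, g τ :=
        intervalIntegral.integral_nonneg hbsr fun u hu =>
          (hg_pos u ((hst₀.trans_le hsb).trans_le hu.1)).le
      have := hga s hst₀.le
      linarith
    have hHnn : (0:ℝ) ≤ ∫ τ in s..b, h τ :=
      intervalIntegral.integral_nonneg hsb hh0
    have hstep : (y s + ∫ τ in s..b, h τ) * Real.exp (∫ τ in s..b, g τ)
        ≤ (a₃ / r + a₂) * Real.exp a₁ := by
      have h1 : y s + (∫ τ in s..b, h τ) ≤ a₃ / r + a₂ := add_le_add hys hH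
      have h2 : Real.exp (∫ τ in s..b, g τ) ≤ Real.exp a₁ := Real.exp_le_exp.2 hG
      have h3 : 0 ≤ y s + ∫ τ in s..b, h τ := add_nonneg (hy_pos s hst₀).le hHnn
      exact mul_le_mul h1 h2 (Real.exp_pos _).le (h3.trans h1)
    exact hcore.trans hstep
  intro t ht
  rcases eq_or_lt_of_le ht with rfl | ht'
  · have hc : ContinuousAt y (t₀ + r) := (hy_diff (t₀ + r) (by linarith)).continuousAt
    have htends : Tendsto (fun t' => y (t' + r)) (𝓝[>] t₀) (𝓝 (y (t₀ + r))) := by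
      have h1 : Tendsto (fun t' : ℝ => t' + r) (𝓝[>] t₀) (𝓝 (t₀ + r)) :=
        ((continuous_add_right r).tendsto t₀).mono_left nhdsWithin_le_nhds
      exact hc.tendsto.comp h1
    exact le_of_tendsto htends (eventually_nhdsWithin_of_forall fun t' ht' => main t' ht')
  · exact main t ht'
end
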